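/- Let n ≥ 1 and let B be an n-dimensional Brownian motion started at 0, and let G = {(t, B(t)) : t ∈ [0,∞)} ⊆ ℝ^{1+n} be the graph of B. Then almost surely the following holds: every nondegenerate arc contained in G is not a quasiarc. That is, almost surely, for every subset A of G that is the image of the interval [0,1] under a homeomorphism and contains more than one point, there is no quasisymmetric homeomorphism from [0,1] onto A (with A carrying the Euclidean metric of ℝ^{1+n}). -/

import Mathlib

open MeasureTheory ProbabilityTheory

noncomputable section

/-- A distortion function `η : [0,∞) → [0,∞)` for quasisymmetric maps: increasing,
continuous, `η 0 = 0` and `η t → ∞` as `t → ∞`. -/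
structure IsDistortion (η : ℝ → ℝ) : Prop where
  continuousOn : ContinuousOn η (Set.Ici 0)
  monotoneOn : MonotoneOn η (Set.Ici 0)
  nonneg : ∀ t : ℝ, 0 ≤ t → 0 ≤ η t
  map_zero : η 0 = 0
  tendsto_atTop : Filter.Tendsto η Filter.atTop Filter.atTop

/-- `f : X ≃ₜ Y` is a quasisymmetric homeomorphism between metric spaces. -/
def IsQuasisymmetry {X Y : Type*} [MetricSpace X] [MetricSpace Y] (f : X ≃ₜ Y) : Prop :=
  ∃ η : ℝ → ℝ, IsDistortion η ∧
    ∀ x y z : X, x ≠ z →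
      dist (f x) (f y) / dist (f x) (f z) ≤ η (dist x y / dist x z)

/-- `B` is an `n`-dimensional Brownian motion started at `0` on the probability
space `Ω`: it starts at `0` a.s., has a.s. continuous sample paths on `[0,∞)`,
has independent increments, and for `0 ≤ s ≤ t` the coordinates of the increment
`B t - B s` are independent centered real Gaussians of variance `t - s`. -/
structure IsBrownianMotion {Ω : Type*} [MeasureSpace Ω] (n : ℕ)
    (B : ℝ → Ω → EuclideanSpace ℝ (Fin n)) : Prop where
  isProbability : IsProbabilityMeasure (ℙ : Measure Ω)
  measurable : ∀ t : ℝ, Measurable (B t)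
  start : ∀ᵐ ω ∂ℙ, B 0 ω = 0
  cont_paths : ∀ᵐ ω ∂ℙ, ContinuousOn (fun t => B t ω) (Set.Ici 0)
  indep_incr : ∀ (k : ℕ) (t : Fin (k + 1) → ℝ), (∀ i, 0 ≤ t i) → Monotone t →
    iIndepFun
      (fun (i : Fin k) (ω : Ω) => B (t i.succ) ω - B (t i.castSucc) ω) ℙ
  coord_indep : ∀ s t : ℝ, 0 ≤ s → s ≤ t →
    iIndepFun
      (fun (i : Fin n) (ω : Ω) => B t ω i - B s ω i) ℙ
  coord_gaussian : ∀ s t : ℝ, 0 ≤ s → s ≤ t → ∀ i : Fin n,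
    Measure.map (fun ω => B t ω i - B s ω i) ℙ = gaussianReal 0 (t - s).toNNReal

/-- The point `(t, v) ∈ ℝ^{1+n}` of the graph of a function into `ℝⁿ`. -/
def graphPoint {n : ℕ} (t : ℝ) (v : EuclideanSpace ℝ (Fin n)) :
    EuclideanSpace ℝ (Fin (1 + n)) :=
  (WithLp.equiv 2 (Fin (1 + n) → ℝ)).symm (Fin.append ![t] (fun j => v j))


section Helpers

open scoped NNReal ENNReal

variable {n C : ℕ}

/-! ### Gaussian measure helper lemmas -/

lemma gaussianReal_Icc_pos (μ : ℝ) {v : ℝ≥0} (hv : v ≠ 0) {a b : ℝ} (hab : a < b) :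
    0 < gaussianReal μ v (Set.Icc a b) := by
  rw [gaussianReal_apply μ hv]
  by_contra hcon
  push_neg at hcon
  have h0 : ∫⁻ x in Set.Icc a b, gaussianPDF μ v x = 0 := le_antisymm hcon zero_le
  rw [lintegral_eq_zero_iff (measurable_gaussianPDF μ v)] at h0
  have h1 : (volume.restrict (Set.Icc a b)) {x | ¬ gaussianPDF μ v x = 0} = 0 := ae_iff.mp h0
  have hall : {x | ¬ gaussianPDF μ v x = 0} = Set.univ := by
    ext x; simp [(gaussianPDF_pos μ hv x).ne']
  rw [hall, Measure.restrict_apply_univ] at h1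
  have h2 : (volume (Set.Icc a b)) ≠ 0 := by
    simp [Real.volume_Icc]
    linarith
  simp_all

lemma gaussianReal_Icc_scale {c : ℝ} (hc : 0 < c) (a b : ℝ) :
    gaussianReal 0 (Real.toNNReal (c^2)) (Set.Icc a b)
      = gaussianReal 0 1 (Set.Icc (a/c) (b/c)) := by
  have h1 : Measure.map (fun x => c * x) (gaussianReal 0 1)
      = gaussianReal 0 (Real.toNNReal (c^2)) := by
    rw [gaussianReal_map_const_mul c]
    congr 1
    · ring
    · ext
      simp [Real.coe_toNNReal _ (sq_nonneg c), NNReal.coe_mul]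
  rw [← h1, Measure.map_apply (by fun_prop) measurableSet_Icc]
  congr 1
  ext x
  simp only [Set.mem_preimage, Set.mem_Icc]
  rw [div_le_iff₀ hc, le_div_iff₀ hc]
  constructor
  · rintro ⟨h1, h2⟩; exact ⟨by linarith [mul_comm c x], by linarith [mul_comm c x]⟩
  · rintro ⟨h1, h2⟩; exact ⟨by linarith [mul_comm x c], by linarith [mul_comm x c]⟩

/-! ### Trial constants -/

def epsC (n C : ℕ) : ℝ := 1 / (2 * C * (n + 1))

def lo1 (n C : ℕ) (i : Fin n) : ℝ := if (i:ℕ) = 0 then 1 else -(epsC n C / 2)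
def hi1 (n C : ℕ) (i : Fin n) : ℝ := if (i:ℕ) = 0 then 1 + epsC n C else epsC n C / 2
def lo2 (n C : ℕ) (i : Fin n) : ℝ := if (i:ℕ) = 0 then -(1 + epsC n C) else -(epsC n C / 2)
def hi2 (n C : ℕ) (i : Fin n) : ℝ := if (i:ℕ) = 0 then -1 else epsC n C / 2

def trialP (n C : ℕ) : ℝ≥0∞ :=
  (∏ i : Fin n, gaussianReal 0 1 (Set.Icc (lo1 n C i) (hi1 n C i))) *
  (∏ i : Fin n, gaussianReal 0 1 (Set.Icc (lo2 n C i) (hi2 n C i)))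

lemma epsC_pos (hC : 1 ≤ C) : 0 < epsC n C := by
  have : (1:ℝ) ≤ C := by exact_mod_cast hC
  unfold epsC; positivity

lemma lo1_lt_hi1 (hC : 1 ≤ C) (i : Fin n) : lo1 n C i < hi1 n C i := by
  have := epsC_pos (n := n) hC
  unfold lo1 hi1; split_ifs <;> linarith

lemma lo2_lt_hi2 (hC : 1 ≤ C) (i : Fin n) : lo2 n C i < hi2 n C i := by
  have := epsC_pos (n := n) hC
  unfold lo2 hi2; split_ifs <;> linarith

lemma sum_lo_ge (i : Fin n) : -(epsC n C) ≤ lo1 n C i + lo2 n C i := by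
  unfold lo1 lo2; split_ifs <;> ring_nf <;> linarith

lemma sum_hi_le (i : Fin n) : hi1 n C i + hi2 n C i ≤ epsC n C := by
  unfold hi1 hi2; split_ifs <;> ring_nf <;> linarith

lemma C2n_eps_sq_le (hn : 1 ≤ n) (hC : 1 ≤ C) : (C:ℝ)^2 * ((n:ℝ) * (epsC n C)^2) ≤ 1/4 := by
  have hCR : (1:ℝ) ≤ C := by exact_mod_cast hC
  have hnR : (1:ℝ) ≤ n := by exact_mod_cast hn
  have key : (C:ℝ)^2 * ((n:ℝ) * (1 / (2*(C:ℝ)*((n:ℝ)+1))) ^ 2) = (n:ℝ)/(4*((n:ℝ)+1)^2) := by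
    field_simp
    ring
  rw [epsC, key]
  rw [div_le_div_iff₀ (by positivity) (by norm_num)]
  nlinarith

lemma trialP_pos (hC : 1 ≤ C) : 0 < trialP n C := by
  rw [trialP]
  refine ENNReal.mul_pos ?_ ?_ <;>
  · rw [← pos_iff_ne_zero, pos_iff_ne_zero, Finset.prod_ne_zero_iff]
    intro i _
    first
    | exact (gaussianReal_Icc_pos 0 one_ne_zero (lo1_lt_hi1 hC i)).ne'
    | exact (gaussianReal_Icc_pos 0 one_ne_zero (lo2_lt_hi2 hC i)).ne'

lemma one_sub_trialP_lt_one (hC : 1 ≤ C) : 1 - trialP n C < 1 :=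
  ENNReal.sub_lt_self ENNReal.one_ne_top one_ne_zero (trialP_pos hC).ne'

/-! ### Geometry of graph points -/

lemma graphPoint_apply_zero (t : ℝ) (v : EuclideanSpace ℝ (Fin n)) :
    graphPoint t v (Fin.castAdd n (0 : Fin 1)) = t := by
  show Fin.append ![t] (fun j => v j) (Fin.castAdd n 0) = t
  rw [Fin.append_left]; rfl

lemma graphPoint_apply_natAdd (t : ℝ) (v : EuclideanSpace ℝ (Fin n)) (i : Fin n) :
    graphPoint t v (Fin.natAdd 1 i) = v i := by
  show Fin.append ![t] (fun j => v j) (Fin.natAdd 1 i) = v i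
  rw [Fin.append_right]

lemma dist_graphPoint (s t : ℝ) (v w : EuclideanSpace ℝ (Fin n)) :
    dist (graphPoint s v) (graphPoint t w)
      = Real.sqrt ((s - t)^2 + ∑ i : Fin n, (v i - w i)^2) := by
  rw [EuclideanSpace.dist_eq]
  congr 1
  rw [Fin.sum_univ_add (f := fun i : Fin (1+n) => dist (graphPoint s v i) (graphPoint t w i) ^ 2)]
  congr 1
  · simp only [Finset.univ_unique, Finset.sum_singleton, Real.dist_eq, sq_abs]
    have hd : (default : Fin 1) = 0 := rfl
    rw [hd, graphPoint_apply_zero, graphPoint_apply_zero]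
  · refine Finset.sum_congr rfl fun i _ => ?_
    simp only [graphPoint_apply_natAdd, Real.dist_eq, sq_abs]

lemma le_dist_graphPoint_coord (s t : ℝ) (v w : EuclideanSpace ℝ (Fin n)) (i : Fin n) :
    |v i - w i| ≤ dist (graphPoint s v) (graphPoint t w) := by
  rw [dist_graphPoint, ← Real.sqrt_sq_eq_abs]
  apply Real.sqrt_le_sqrt
  have h1 : (v i - w i)^2 ≤ ∑ j : Fin n, (v j - w j)^2 :=
    Finset.single_le_sum (f := fun j => (v j - w j)^2) (fun j _ => sq_nonneg _)
      (Finset.mem_univ i)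
  nlinarith [sq_nonneg (s - t)]

end Helpers

section BMHelpers

open scoped NNReal ENNReal

variable {Ω : Type*} [MeasureSpace Ω] {n : ℕ} {B : ℝ → Ω → EuclideanSpace ℝ (Fin n)}

lemma meas_coord (hB : IsBrownianMotion n B) (s t : ℝ) (i : Fin n) :
    Measurable (fun ω => B t ω i - B s ω i) :=
  Measurable.sub (f := fun ω => B t ω i) (g := fun ω => B s ω i)
    ((measurable_pi_apply i).comp ((WithLp.measurable_ofLp 2 _).comp (hB.measurable t) :
      Measurable fun ω => WithLp.ofLp (B t ω)))
    ((measurable_pi_apply i).comp ((WithLp.measurable_ofLp 2 _).comp (hB.measurable s) :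
      Measurable fun ω => WithLp.ofLp (B s ω)))

lemma incr_prob (hB : IsBrownianMotion n B) {s t : ℝ} (hs : 0 ≤ s) (hst : s < t)
    (i : Fin n) (α β : ℝ) :
    ℙ {ω : Ω | B t ω i - B s ω i ∈ Set.Icc (α * Real.sqrt (t-s)) (β * Real.sqrt (t-s))}
      = gaussianReal 0 1 (Set.Icc α β) := by
  have hc : (0:ℝ) < Real.sqrt (t - s) := Real.sqrt_pos.2 (by linarith)
  have h1 : ℙ {ω : Ω | B t ω i - B s ω i ∈ Set.Icc (α * Real.sqrt (t-s)) (β * Real.sqrt (t-s))}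
      = Measure.map (fun ω => B t ω i - B s ω i) ℙ
          (Set.Icc (α * Real.sqrt (t-s)) (β * Real.sqrt (t-s))) := by
    rw [Measure.map_apply (meas_coord hB s t i) measurableSet_Icc]
    rfl
  rw [h1, hB.coord_gaussian s t hs hst.le i]
  have h2 : (t - s) = (Real.sqrt (t-s))^2 := (Real.sq_sqrt (by linarith)).symm
  rw [h2, gaussianReal_Icc_scale hc]
  rw [Real.sqrt_sq hc.le, mul_div_cancel_right₀ _ hc.ne', mul_div_cancel_right₀ _ hc.ne']

lemma box_prob (hB : IsBrownianMotion n B) {s t : ℝ} (hs : 0 ≤ s) (hst : s ≤ t)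
    (I : Fin n → Set ℝ) (hI : ∀ i, MeasurableSet (I i)) :
    ℙ {ω : Ω | ∀ i, B t ω i - B s ω i ∈ I i}
      = ∏ i : Fin n, ℙ {ω : Ω | B t ω i - B s ω i ∈ I i} := by
  have h := (hB.coord_indep s t hs hst).measure_inter_preimage_eq_mul
    (S := Finset.univ) (sets := I) (fun i _ => hI i)
  convert h using 2
  ext ω
  simp
  rfl

lemma vec_box (s t : ℝ) (I : Fin n → Set ℝ) :
    (fun ω => B t ω - B s ω) ⁻¹' (WithLp.ofLp ⁻¹' Set.univ.pi I) = {ω : Ω | ∀ i, B t ω i - B s ω i ∈ I i} := by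
  ext ω
  simp only [Set.mem_preimage, Set.mem_pi, Set.mem_univ, forall_true_left, Set.mem_setOf_eq,
    PiLp.sub_apply]

end BMHelpers

section Scale
open scoped NNReal ENNReal
variable {Ω : Type*} [MeasureSpace Ω] {n : ℕ} {B : ℝ → Ω → EuclideanSpace ℝ (Fin n)}

set_option maxHeartbeats 1000000 in
lemma scale_lemma (hB : IsBrownianMotion n B) (hn : 1 ≤ n) (C : ℕ) (hC : 1 ≤ C)
    {a b : ℝ} (ha : 0 ≤ a) (hab : a < b) (N : ℕ) (hN : 1 ≤ N)
    (hsmall : (b - a) / N ≤ 1 / (4 * C ^ 2)) :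
    ∃ E : Set Ω, MeasurableSet E ∧ ℙ Eᶜ ≤ (1 - trialP n C) ^ N ∧
      ∀ ω ∈ E, ∃ s u t : ℝ, a ≤ s ∧ s < u ∧ u < t ∧ t ≤ b ∧
        (C : ℝ) * dist (graphPoint s (B s ω)) (graphPoint t (B t ω))
          < dist (graphPoint s (B s ω)) (graphPoint u (B u ω)) := by
  classical
  haveI := hB.isProbability
  have hNR : (0:ℝ) < N := by exact_mod_cast hN
  have hCR : (1:ℝ) ≤ C := by exact_mod_cast hC
  have hnR : (1:ℝ) ≤ n := by exact_mod_cast hn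
  have hε : 0 < epsC n C := epsC_pos hC
  set h : ℝ := (b - a) / N with hhdef
  have hh : 0 < h := div_pos (by linarith) hNR
  have hNh : (N : ℝ) * h = b - a := by
    rw [hhdef]; field_simp
  set σ : ℝ := Real.sqrt (h / 2) with hσdef
  have hσ : 0 < σ := Real.sqrt_pos.2 (by linarith)
  have hσ2 : σ ^ 2 = h / 2 := Real.sq_sqrt (by linarith)
  -- the grid
  set τ : Fin (2 * N + 1) → ℝ := fun j => a + (j : ℕ) * (h / 2) with hτdef
  have hτ0 : ∀ j, 0 ≤ τ j := fun j => by
    have : (0:ℝ) ≤ (j : ℕ) := Nat.cast_nonneg _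
    have : (0:ℝ) ≤ (j : ℕ) * (h/2) := by positivity
    simp only [hτdef]; linarith
  have hτmono : Monotone τ := by
    intro x y hxy
    have hxy' : (x : ℕ) ≤ (y : ℕ) := hxy
    simp only [hτdef]
    have : ((x:ℕ):ℝ) ≤ ((y:ℕ):ℝ) := by exact_mod_cast hxy'
    nlinarith
  set D : Fin (2 * N) → Ω → EuclideanSpace ℝ (Fin n) :=
    fun j ω => B (τ j.succ) ω - B (τ j.castSucc) ω with hDdef
  have hDmeas : ∀ j, Measurable (D j) := fun j => (hB.measurable _).sub (hB.measurable _)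
  have hindep : iIndepFun D ℙ :=
    hB.indep_incr (2*N) τ hτ0 hτmono
  have hgap : ∀ j : Fin (2*N), τ j.succ - τ j.castSucc = h / 2 := by
    intro j
    simp only [hτdef, Fin.val_succ, Fin.coe_castSucc]
    push_cast; ring
  have hS1meas : MeasurableSet (WithLp.ofLp ⁻¹' Set.univ.pi (fun i => Set.Icc (lo1 n C i * σ) (hi1 n C i * σ)) :
      Set (EuclideanSpace ℝ (Fin n))) :=
    (MeasurableSet.univ_pi fun i => measurableSet_Icc).preimage (WithLp.measurable_ofLp 2 _)
  have hS2meas : MeasurableSet (WithLp.ofLp ⁻¹' Set.univ.pi (fun i => Set.Icc (lo2 n C i * σ) (hi2 n C i * σ)) :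
      Set (EuclideanSpace ℝ (Fin n))) :=
    (MeasurableSet.univ_pi fun i => measurableSet_Icc).preimage (WithLp.measurable_ofLp 2 _)
  have hDbox : ∀ (j : Fin (2*N)) (lo hi : Fin n → ℝ),
      ℙ (D j ⁻¹' (WithLp.ofLp ⁻¹' Set.univ.pi (fun i => Set.Icc (lo i * σ) (hi i * σ))))
        = ∏ i, gaussianReal 0 1 (Set.Icc (lo i) (hi i)) := by
    intro j lo hi
    have hlt : τ j.castSucc < τ j.succ := by
      have h0 : 0 < τ j.succ - τ j.castSucc := by rw [hgap j]; positivity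
      linarith
    rw [show D j = fun ω => B (τ j.succ) ω - B (τ j.castSucc) ω from rfl]
    rw [vec_box, box_prob hB (hτ0 _) hlt.le _ (fun i => measurableSet_Icc)]
    refine Finset.prod_congr rfl fun i _ => ?_
    have h2 := incr_prob hB (hτ0 j.castSucc) hlt i (lo i) (hi i)
    rw [hgap j] at h2
    rw [← hσdef] at h2
    exact h2
  have h2k : ∀ k : Fin N, 2 * (k:ℕ) < 2 * N := fun k => by have := k.isLt; omega
  have h2k1 : ∀ k : Fin N, 2 * (k:ℕ) + 1 < 2 * N := fun k => by have := k.isLt; omega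
  set A : Fin N → Set Ω := fun k =>
    D ⟨2 * k, h2k k⟩ ⁻¹' (WithLp.ofLp ⁻¹' Set.univ.pi (fun i => Set.Icc (lo1 n C i * σ) (hi1 n C i * σ))) ∩
    D ⟨2 * k + 1, h2k1 k⟩ ⁻¹' (WithLp.ofLp ⁻¹' Set.univ.pi (fun i => Set.Icc (lo2 n C i * σ) (hi2 n C i * σ)))
    with hAdef
  have hAmeas : ∀ k, MeasurableSet (A k) := fun k =>
    ((hDmeas _) hS1meas).inter ((hDmeas _) hS2meas)
  have hPA : ∀ k, ℙ (A k) = trialP n C := by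
    intro k
    have hne : (⟨2 * k, h2k k⟩ : Fin (2*N)) ≠ ⟨2 * k + 1, h2k1 k⟩ := by
      simp [Fin.ext_iff]
    have hind := hindep.indepFun hne
    rw [show A k =
      D ⟨2 * k, h2k k⟩ ⁻¹' (WithLp.ofLp ⁻¹' Set.univ.pi (fun i => Set.Icc (lo1 n C i * σ) (hi1 n C i * σ))) ∩
      D ⟨2 * k + 1, h2k1 k⟩ ⁻¹' (WithLp.ofLp ⁻¹' Set.univ.pi (fun i => Set.Icc (lo2 n C i * σ) (hi2 n C i * σ)))
      from rfl]
    rw [hind.measure_inter_preimage_eq_mul _ _ hS1meas hS2meas, hDbox, hDbox, trialP]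
  have hprefix : ∀ m : ℕ, m ≤ N →
      ℙ (⋂ k ∈ Finset.univ.filter (fun k : Fin N => (k:ℕ) < m), (A k)ᶜ)
        = (1 - trialP n C) ^ m := by
    intro m
    induction m with
    | zero => intro _; simp
    | succ m ih =>
      intro hm
      have hmN : m < N := hm
      have ihm := ih (Nat.le_of_lt hmN)
      set S : Finset (Fin (2*N)) := Finset.univ.filter (fun j : Fin (2*N) => (j:ℕ) < 2*m)
        with hSdef
      set T : Finset (Fin (2*N)) := Finset.univ.filter
        (fun j : Fin (2*N) => 2*m ≤ (j:ℕ) ∧ (j:ℕ) < 2*m+2) with hTdef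
      have hdisj : Disjoint S T := by
        rw [Finset.disjoint_left]
        intro j hj1 hj2
        rw [hSdef, Finset.mem_filter] at hj1
        rw [hTdef, Finset.mem_filter] at hj2
        omega
      have hIF := hindep.indepFun_finset S T hdisj hDmeas
      have memS1 : ∀ (k : Fin N), (k:ℕ) < m → (⟨2*k, h2k k⟩ : Fin (2*N)) ∈ S := by
        intro k hk; rw [hSdef, Finset.mem_filter]
        exact ⟨Finset.mem_univ _, by simp only [Fin.val_mk]; omega⟩
      have memS2 : ∀ (k : Fin N), (k:ℕ) < m → (⟨2*k+1, h2k1 k⟩ : Fin (2*N)) ∈ S := by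
        intro k hk; rw [hSdef, Finset.mem_filter]
        exact ⟨Finset.mem_univ _, by simp only [Fin.val_mk]; omega⟩
      have memT1 : (⟨2*(⟨m, hmN⟩ : Fin N), h2k ⟨m,hmN⟩⟩ : Fin (2*N)) ∈ T := by
        rw [hTdef, Finset.mem_filter]
        refine ⟨Finset.mem_univ _, ?_⟩
        simp only [Fin.val_mk]
        omega
      have memT2 : (⟨2*(⟨m, hmN⟩ : Fin N)+1, h2k1 ⟨m,hmN⟩⟩ : Fin (2*N)) ∈ T := by
        rw [hTdef, Finset.mem_filter]
        refine ⟨Finset.mem_univ _, ?_⟩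
        simp only [Fin.val_mk]
        omega
      set QS : Set ((j : S) → EuclideanSpace ℝ (Fin n)) :=
        ⋂ (k : Fin N), ⋂ (hk : (k:ℕ) < m),
          ((fun g : (j : S) → EuclideanSpace ℝ (Fin n) => g ⟨_, memS1 k hk⟩) ⁻¹'
              (WithLp.ofLp ⁻¹' Set.univ.pi (fun i => Set.Icc (lo1 n C i * σ) (hi1 n C i * σ))) ∩
           (fun g : (j : S) → EuclideanSpace ℝ (Fin n) => g ⟨_, memS2 k hk⟩) ⁻¹'
              (WithLp.ofLp ⁻¹' Set.univ.pi (fun i => Set.Icc (lo2 n C i * σ) (hi2 n C i * σ))))ᶜ with hQSdef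
      have hQSmeas : MeasurableSet QS := by
        apply MeasurableSet.iInter; intro k
        apply MeasurableSet.iInter; intro hk
        exact ((measurable_pi_apply
            (⟨⟨2*(k:ℕ), h2k k⟩, memS1 k hk⟩ : {x // x ∈ S}) hS1meas).inter
          (measurable_pi_apply
            (⟨⟨2*(k:ℕ)+1, h2k1 k⟩, memS2 k hk⟩ : {x // x ∈ S}) hS2meas)).compl
      set QT : Set ((j : T) → EuclideanSpace ℝ (Fin n)) :=
        ((fun g : (j : T) → EuclideanSpace ℝ (Fin n) => g ⟨_, memT1⟩) ⁻¹'
            (WithLp.ofLp ⁻¹' Set.univ.pi (fun i => Set.Icc (lo1 n C i * σ) (hi1 n C i * σ))) ∩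
         (fun g : (j : T) → EuclideanSpace ℝ (Fin n) => g ⟨_, memT2⟩) ⁻¹'
            (WithLp.ofLp ⁻¹' Set.univ.pi (fun i => Set.Icc (lo2 n C i * σ) (hi2 n C i * σ))))ᶜ with hQTdef
      have hQTmeas : MeasurableSet QT :=
        ((measurable_pi_apply
            (⟨⟨2*(⟨m, hmN⟩ : Fin N), h2k ⟨m,hmN⟩⟩, memT1⟩ : {x // x ∈ T}) hS1meas).inter
          (measurable_pi_apply
            (⟨⟨2*(⟨m, hmN⟩ : Fin N)+1, h2k1 ⟨m,hmN⟩⟩, memT2⟩ : {x // x ∈ T}) hS2meas)).compl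
      have hreprS : (fun ω (j : S) => D j ω) ⁻¹' QS
          = ⋂ k ∈ Finset.univ.filter (fun k : Fin N => (k:ℕ) < m), (A k)ᶜ := by
        ext ω
        simp only [hQSdef, Set.mem_preimage, Set.mem_iInter, Set.mem_compl_iff,
          Set.mem_inter_iff, Finset.mem_filter, Finset.mem_univ, true_and, hAdef]
      have hreprT : (fun ω (j : T) => D j ω) ⁻¹' QT = (A ⟨m, hmN⟩)ᶜ := by
        ext ω
        simp only [hQTdef, Set.mem_preimage, Set.mem_compl_iff, Set.mem_inter_iff, hAdef]
      have hfilter : Finset.univ.filter (fun k : Fin N => (k:ℕ) < m + 1)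
          = insert (⟨m, hmN⟩ : Fin N) (Finset.univ.filter (fun k : Fin N => (k:ℕ) < m)) := by
        ext k
        simp only [Finset.mem_filter, Finset.mem_univ, true_and, Finset.mem_insert, Fin.ext_iff]
        omega
      rw [hfilter, Finset.set_biInter_insert, Set.inter_comm, ← hreprS, ← hreprT]
      rw [hIF.measure_inter_preimage_eq_mul _ _ hQSmeas hQTmeas, hreprS, hreprT, ihm,
        prob_compl_eq_one_sub (hAmeas _), hPA, pow_succ]
  have hAll : ℙ (⋂ k : Fin N, (A k)ᶜ) = (1 - trialP n C) ^ N := by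
    have hh2 := hprefix N le_rfl
    have hfil : Finset.univ.filter (fun k : Fin N => (k:ℕ) < N) = Finset.univ := by
      ext k; simp [k.isLt]
    rw [hfil] at hh2
    simpa using hh2
  refine ⟨⋃ k : Fin N, A k, MeasurableSet.iUnion (fun k => hAmeas k), ?_, ?_⟩
  · rw [Set.compl_iUnion, hAll]
  · intro ω hω
    obtain ⟨k, hk⟩ := Set.mem_iUnion.mp hω
    obtain ⟨hX, hY⟩ := hk
    set j1 : Fin (2*N) := ⟨2*k, h2k k⟩ with hj1def
    set j2 : Fin (2*N) := ⟨2*k+1, h2k1 k⟩ with hj2def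
    have hj12 : j1.succ = j2.castSucc := by
      rw [Fin.ext_iff]; simp [hj1def, hj2def]
    refine ⟨τ j1.castSucc, τ j1.succ, τ j2.succ, ?_, ?_, ?_, ?_, ?_⟩
    · simp only [hτdef]
      have : (0:ℝ) ≤ ((j1.castSucc : ℕ) : ℝ) * (h/2) := by positivity
      linarith
    · have h0 : 0 < τ j1.succ - τ j1.castSucc := by rw [hgap j1]; positivity
      linarith
    · have h0 : 0 < τ j2.succ - τ j2.castSucc := by rw [hgap j2]; positivity
      rw [← hj12] at h0
      linarith
    · have hkN' : ((k:ℕ):ℝ) + 1 ≤ (N:ℝ) := by exact_mod_cast k.isLt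
      have h1 : ((2*(k:ℕ)+1+1 : ℕ) : ℝ) ≤ 2*(N:ℝ) := by push_cast; linarith
      have h2 : ((2*(k:ℕ)+1+1 : ℕ) : ℝ) * (h/2) ≤ 2*(N:ℝ) * (h/2) :=
        mul_le_mul_of_nonneg_right h1 (by linarith)
      have h3 : 2*(N:ℝ) * (h/2) = b - a := by rw [← hNh]; ring
      show a + ((2*(k:ℕ)+1+1 : ℕ) : ℝ) * (h/2) ≤ b
      linarith
    · have hus : τ j1.succ - τ j1.castSucc = h/2 := hgap j1
      have htu : τ j2.succ - τ j1.succ = h/2 := by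
        have := hgap j2
        rw [← hj12] at this
        exact this
      have hXi : ∀ i, B (τ j1.succ) ω i - B (τ j1.castSucc) ω i ∈
          Set.Icc (lo1 n C i * σ) (hi1 n C i * σ) := by
        intro i
        rw [Set.mem_preimage, Set.mem_preimage, Set.mem_pi] at hX
        have h2 := hX i (Set.mem_univ i)
        have h3 : D j1 ω i = B (τ j1.succ) ω i - B (τ j1.castSucc) ω i := rfl
        rwa [h3] at h2
      have hYi : ∀ i, B (τ j2.succ) ω i - B (τ j1.succ) ω i ∈
          Set.Icc (lo2 n C i * σ) (hi2 n C i * σ) := by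
        intro i
        rw [Set.mem_preimage, Set.mem_preimage, Set.mem_pi] at hY
        have h2 := hY i (Set.mem_univ i)
        have h3 : D j2 ω i = B (τ j2.succ) ω i - B (τ j2.castSucc) ω i := rfl
        rw [← hj12] at h3
        rwa [h3] at h2
      have hsq : ∀ i, (B (τ j1.castSucc) ω i - B (τ j2.succ) ω i)^2 ≤ (epsC n C * σ)^2 := by
        intro i
        obtain ⟨hx1, hx2⟩ := Set.mem_Icc.mp (hXi i)
        obtain ⟨hy1, hy2⟩ := Set.mem_Icc.mp (hYi i)
        have hlo := sum_lo_ge (n := n) (C := C) i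
        have hhi := sum_hi_le (n := n) (C := C) i
        have e1 : -(epsC n C) * σ ≤ (lo1 n C i + lo2 n C i) * σ :=
          mul_le_mul_of_nonneg_right hlo hσ.le
        have e2 : (hi1 n C i + hi2 n C i) * σ ≤ epsC n C * σ :=
          mul_le_mul_of_nonneg_right hhi hσ.le
        have hb1 : -(epsC n C * σ) ≤ B (τ j2.succ) ω i - B (τ j1.castSucc) ω i := by
          nlinarith [e1]
        have hb2 : B (τ j2.succ) ω i - B (τ j1.castSucc) ω i ≤ epsC n C * σ := by
          nlinarith [e2]
        have hb3 : -(epsC n C * σ) ≤ B (τ j1.castSucc) ω i - B (τ j2.succ) ω i := by linarith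
        have hb4 : B (τ j1.castSucc) ω i - B (τ j2.succ) ω i ≤ epsC n C * σ := by linarith
        exact sq_le_sq' hb3 hb4
      have hsum : ∑ i : Fin n, (B (τ j1.castSucc) ω i - B (τ j2.succ) ω i)^2
          ≤ (n:ℝ) * (epsC n C * σ)^2 := by
        calc ∑ i : Fin n, (B (τ j1.castSucc) ω i - B (τ j2.succ) ω i)^2
            ≤ ∑ _i : Fin n, (epsC n C * σ)^2 := Finset.sum_le_sum (fun i _ => hsq i)
          _ = (n:ℝ) * (epsC n C * σ)^2 := by
              rw [Finset.sum_const, Finset.card_univ, Fintype.card_fin, nsmul_eq_mul]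
      have hsns : 0 ≤ ∑ i : Fin n, (B (τ j1.castSucc) ω i - B (τ j2.succ) ω i)^2 :=
        Finset.sum_nonneg (fun i _ => sq_nonneg _)
      have hdut : (dist (graphPoint (τ j1.castSucc) (B (τ j1.castSucc) ω))
            (graphPoint (τ j2.succ) (B (τ j2.succ) ω)))^2
          ≤ h^2 + (n:ℝ) * (epsC n C * σ)^2 := by
        rw [dist_graphPoint, Real.sq_sqrt (by positivity)]
        have he : (τ j1.castSucc - τ j2.succ)^2 = h^2 := by
          have hst : τ j1.castSucc - τ j2.succ = -h := by linear_combination - hus - htu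
          rw [hst]; ring
        linarith
      have hCeps : (C:ℝ)^2 * ((n:ℝ) * (epsC n C)^2) ≤ 1/4 := C2n_eps_sq_le hn hC
      have hCsm : (C:ℝ)^2 * h ≤ 1/4 := by
        calc (C:ℝ)^2*h ≤ (C:ℝ)^2 * (1/(4*(C:ℝ)^2)) :=
              mul_le_mul_of_nonneg_left hsmall (by positivity)
          _ = 1/4 := by field_simp
      have hdnn : (0:ℝ) ≤ dist (graphPoint (τ j1.castSucc) (B (τ j1.castSucc) ω))
            (graphPoint (τ j2.succ) (B (τ j2.succ) ω)) := dist_nonneg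
      have hkey : ((C:ℝ) * dist (graphPoint (τ j1.castSucc) (B (τ j1.castSucc) ω))
            (graphPoint (τ j2.succ) (B (τ j2.succ) ω)))^2 < σ^2 := by
        have hA1 : (C:ℝ)^2 * (dist (graphPoint (τ j1.castSucc) (B (τ j1.castSucc) ω))
              (graphPoint (τ j2.succ) (B (τ j2.succ) ω)))^2
            ≤ (C:ℝ)^2 * (h^2 + (n:ℝ) * (epsC n C * σ)^2) :=
          mul_le_mul_of_nonneg_left hdut (by positivity)
        have hA2 : (C:ℝ)^2 * (h^2 + (n:ℝ) * (epsC n C * σ)^2)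
            = ((C:ℝ)^2*h)*h + ((C:ℝ)^2*((n:ℝ)*(epsC n C)^2))*σ^2 := by ring
        have hA3 : ((C:ℝ)^2*h)*h ≤ (1/4)*h := mul_le_mul_of_nonneg_right hCsm hh.le
        have hA4 : ((C:ℝ)^2*((n:ℝ)*(epsC n C)^2))*σ^2 ≤ (1/4)*σ^2 :=
          mul_le_mul_of_nonneg_right hCeps (sq_nonneg σ)
        nlinarith [hA1, hA2, hA3, hA4, hσ2, hh]
      have hCd : (C:ℝ) * dist (graphPoint (τ j1.castSucc) (B (τ j1.castSucc) ω))
            (graphPoint (τ j2.succ) (B (τ j2.succ) ω)) < σ :=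
        lt_of_pow_lt_pow_left₀ 2 hσ.le hkey
      have hi0 : σ ≤ B (τ j1.succ) ω ⟨0, hn⟩ - B (τ j1.castSucc) ω ⟨0, hn⟩ := by
        obtain ⟨hx1, _⟩ := Set.mem_Icc.mp (hXi ⟨0, hn⟩)
        have hl : lo1 n C ⟨0, hn⟩ = 1 := by simp [lo1]
        rw [hl, one_mul] at hx1
        exact hx1
      have hdsu : σ ≤ dist (graphPoint (τ j1.castSucc) (B (τ j1.castSucc) ω))
          (graphPoint (τ j1.succ) (B (τ j1.succ) ω)) := by
        have h1 := le_dist_graphPoint_coord (τ j1.castSucc) (τ j1.succ)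
          (B (τ j1.castSucc) ω) (B (τ j1.succ) ω) ⟨0, hn⟩
        have h2 : σ ≤ |B (τ j1.castSucc) ω ⟨0, hn⟩ - B (τ j1.succ) ω ⟨0, hn⟩| := by
          rw [abs_sub_comm]
          exact le_trans hi0 (le_abs_self _)
        linarith
      linarith


end Scale

section KeyProb

open scoped NNReal ENNReal

variable {Ω : Type*} [MeasureSpace Ω] {n : ℕ} {B : ℝ → Ω → EuclideanSpace ℝ (Fin n)}

lemma key_prob (hB : IsBrownianMotion n B) (hn : 1 ≤ n) (C : ℕ) (hC : 1 ≤ C)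
    {a b : ℝ} (ha : 0 ≤ a) (hab : a < b) :
    ∀ᵐ ω ∂ℙ, ∃ s u t : ℝ, a ≤ s ∧ s < u ∧ u < t ∧ t ≤ b ∧
      (C : ℝ) * dist (graphPoint s (B s ω)) (graphPoint t (B t ω))
        < dist (graphPoint s (B s ω)) (graphPoint u (B u ω)) := by
  haveI := hB.isProbability
  have hCR : (1:ℝ) ≤ C := by exact_mod_cast hC
  have hC4 : (0:ℝ) < 4 * (C:ℝ)^2 := by positivity
  obtain ⟨N1, hN1⟩ := exists_nat_gt ((b - a) * (4 * (C:ℝ)^2))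
  have hsmall : ∀ m : ℕ, (b - a) / ((N1 + 1 + m : ℕ) : ℝ) ≤ 1 / (4 * (C:ℝ)^2) := by
    intro m
    have hpos : (0:ℝ) < ((N1 + 1 + m : ℕ):ℝ) := by positivity
    rw [div_le_div_iff₀ hpos hC4]
    have h1 : (b - a) * (4*(C:ℝ)^2) ≤ (N1:ℝ) := hN1.le
    have h2 : (N1:ℝ) ≤ ((N1 + 1 + m : ℕ):ℝ) := by
      push_cast
      linarith [Nat.cast_nonneg (α := ℝ) m]
    linarith
  have hsmall' : ∀ m : ℕ, (b - a) / ((N1 + 1 + m : ℕ) : ℝ) ≤ 1 / (4 * ((C:ℕ):ℝ)^2) := hsmall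
  choose E hEmeas hEP hEprop using fun m : ℕ =>
    scale_lemma hB hn C hC ha hab (N1 + 1 + m) (by omega) (hsmall' m)
  have hnull : ℙ ((⋃ m : ℕ, E m)ᶜ) = 0 := by
    refine le_antisymm ?_ zero_le
    have hle : ∀ m : ℕ, ℙ ((⋃ m' : ℕ, E m')ᶜ) ≤ (1 - trialP n C) ^ (N1 + 1 + m) := by
      intro m
      refine le_trans (measure_mono ?_) (hEP m)
      rw [Set.compl_iUnion]
      exact Set.iInter_subset _ m
    have h1 : (1 - trialP n C) < 1 := one_sub_trialP_lt_one hC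
    have htend : Filter.Tendsto (fun m : ℕ => (1 - trialP n C) ^ (N1 + 1 + m))
        Filter.atTop (nhds 0) := by
      have h2 := ENNReal.tendsto_pow_atTop_nhds_zero_of_lt_one h1
      refine h2.comp ?_
      exact Filter.tendsto_atTop_mono (fun m => Nat.le_add_left m (N1+1)) Filter.tendsto_id
    exact ge_of_tendsto' htend hle
  have hU : ∀ᵐ ω ∂ℙ, ω ∈ ⋃ m : ℕ, E m := by
    rw [ae_iff]
    exact hnull
  filter_upwards [hU] with ω hω
  obtain ⟨m, hm⟩ := Set.mem_iUnion.mp hω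
  exact hEprop m ω hm

end KeyProb

section Deterministic

variable {n : ℕ}

lemma deterministic_part (hn : 1 ≤ n) (f0 : ℝ → EuclideanSpace ℝ (Fin n))
    (hprop : ∀ (C : ℕ) (qa qb : ℚ), 1 ≤ C → 0 ≤ qa → (qa:ℝ) < (qb:ℝ) →
      ∃ s u t : ℝ, (qa:ℝ) ≤ s ∧ s < u ∧ u < t ∧ t ≤ (qb:ℝ) ∧
        (C:ℝ) * dist (graphPoint s (f0 s)) (graphPoint t (f0 t))
          < dist (graphPoint s (f0 s)) (graphPoint u (f0 u))) :
    ∀ A : Set (EuclideanSpace ℝ (Fin (1 + n))),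
      A ⊆ (fun t => graphPoint t (f0 t)) '' Set.Ici 0 →
      Nonempty ((Set.Icc (0 : ℝ) 1) ≃ₜ A) →
      A.Nontrivial →
      ¬ ∃ f : (Set.Icc (0 : ℝ) 1) ≃ₜ A, IsQuasisymmetry f := by
  intro A hsub _hne hnt
  rintro ⟨f, η, hη, hqs⟩
  set φ : ℝ → EuclideanSpace ℝ (Fin (1+n)) := fun t => graphPoint t (f0 t) with hφdef
  set proj : EuclideanSpace ℝ (Fin (1+n)) → ℝ := fun x => x (Fin.castAdd n (0 : Fin 1))
    with hprojdef
  have hproj : ∀ t, proj (φ t) = t := fun t => graphPoint_apply_zero t (f0 t)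
  have hprojCont : Continuous proj := by fun_prop
  -- every point of A is a graph point over its projection
  have hAgraph : ∀ y ∈ A, φ (proj y) = y ∧ 0 ≤ proj y := by
    intro y hy
    obtain ⟨t0, ht0, rfl⟩ := hsub hy
    rw [hproj t0]
    exact ⟨rfl, ht0⟩
  have hprojInj : ∀ y₁ ∈ A, ∀ y₂ ∈ A, proj y₁ = proj y₂ → y₁ = y₂ := by
    intro y₁ h₁ y₂ h₂ hp
    rw [← (hAgraph y₁ h₁).1, ← (hAgraph y₂ h₂).1, hp]
  -- parametrization of A over [0,1]
  set g : ℝ → EuclideanSpace ℝ (Fin (1+n)) :=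
    fun r => (f (Set.projIcc 0 1 zero_le_one r) : EuclideanSpace ℝ (Fin (1+n))) with hgdef
  have hgCont : Continuous g :=
    continuous_subtype_val.comp (f.continuous.comp continuous_projIcc)
  have hgA : ∀ r, g r ∈ A := fun r => (f (Set.projIcc 0 1 zero_le_one r)).2
  have hgimg : g '' Set.Icc 0 1 = A := by
    ext y
    constructor
    · rintro ⟨r, _, rfl⟩; exact hgA r
    · intro hy
      refine ⟨(f.symm ⟨y, hy⟩ : Set.Icc (0:ℝ) 1), (f.symm ⟨y, hy⟩).2, ?_⟩
      rw [hgdef]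
      simp only
      rw [Set.projIcc_of_mem zero_le_one (f.symm ⟨y, hy⟩).2]
      simp
  -- the projection of A is a nondegenerate compact interval
  set T : Set ℝ := proj '' A with hTdef
  have hTcomp : IsCompact T := by
    rw [hTdef, ← hgimg, ← Set.image_comp]
    exact isCompact_Icc.image (hprojCont.comp hgCont)
  have hTconn : IsConnected T := by
    rw [hTdef, ← hgimg, ← Set.image_comp]
    refine ⟨⟨proj (g 0), ⟨0, by simp, rfl⟩⟩, ?_⟩
    exact (isPreconnected_Icc).image _ (hprojCont.comp hgCont).continuousOn
  have hT : T = Set.Icc (sInf T) (sSup T) := eq_Icc_of_connected_compact hTconn hTcomp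
  have hTpos : ∀ r ∈ T, φ r ∈ A ∧ 0 ≤ r := by
    rintro r ⟨y, hy, rfl⟩
    obtain ⟨h1, h2⟩ := hAgraph y hy
    rw [h1]
    exact ⟨hy, h2⟩
  set α := sInf T with hα
  set β := sSup T with hβ
  have hαβ : α < β := by
    obtain ⟨y₁, hy₁, y₂, hy₂, hne⟩ := hnt
    have hr : proj y₁ ≠ proj y₂ := fun hp => hne (hprojInj y₁ hy₁ y₂ hy₂ hp)
    have h1 : proj y₁ ∈ T := ⟨y₁, hy₁, rfl⟩
    have h2 : proj y₂ ∈ T := ⟨y₂, hy₂, rfl⟩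
    rw [hT] at h1 h2
    obtain ⟨h1a, h1b⟩ := h1
    obtain ⟨h2a, h2b⟩ := h2
    rcases lt_or_gt_of_ne hr with hlt | hgt
    · linarith
    · linarith
  have hα0 : 0 ≤ α := by
    have hmem : α ∈ T := by rw [hT]; exact ⟨le_refl _, by linarith⟩
    exact (hTpos α hmem).2
  obtain ⟨qa, hqa1, hqa2⟩ := exists_rat_btwn hαβ
  obtain ⟨qb, hqb1, hqb2⟩ := exists_rat_btwn hqa2
  have hqa0 : 0 ≤ qa := by
    have : (0:ℝ) ≤ (qa:ℝ) := by linarith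
    exact_mod_cast this
  set C : ℕ := ⌈η 1⌉₊ + 1 with hCdef
  have hC1 : 1 ≤ C := Nat.le_add_left 1 _
  have hCgt : η 1 < C := by
    have h1 : η 1 ≤ (⌈η 1⌉₊ : ℝ) := Nat.le_ceil _
    have h2 : ((⌈η 1⌉₊ : ℕ) : ℝ) < ((⌈η 1⌉₊ + 1 : ℕ) : ℝ) := by exact_mod_cast Nat.lt_succ_self _
    rw [hCdef]
    exact lt_of_le_of_lt h1 h2
  obtain ⟨s, u, t, hs, hsu, hut, htb, hineq⟩ := hprop C qa qb hC1 hqa0 (by exact_mod_cast hqb1)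
  -- s, u, t are in T
  have hmemT : ∀ r : ℝ, s ≤ r → r ≤ t → φ r ∈ A := by
    intro r h1 h2
    have : r ∈ T := by
      rw [hT]
      constructor
      · linarith
      · linarith
    exact (hTpos r this).1
  have hsA : φ s ∈ A := hmemT s le_rfl (by linarith)
  have huA : φ u ∈ A := hmemT u (by linarith) (by linarith)
  have htA : φ t ∈ A := hmemT t (by linarith) le_rfl
  set x : Set.Icc (0:ℝ) 1 := f.symm ⟨φ s, hsA⟩ with hxdef
  set y : Set.Icc (0:ℝ) 1 := f.symm ⟨φ u, huA⟩ with hydef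
  set z : Set.Icc (0:ℝ) 1 := f.symm ⟨φ t, htA⟩ with hzdef
  -- the coordinate function F along the arc
  set F : ℝ → ℝ := fun r => proj (g r) with hFdef
  have hFCont : Continuous F := hprojCont.comp hgCont
  have hFinj : Set.InjOn F (Set.Icc 0 1) := by
    intro r1 hr1 r2 hr2 hF12
    have hg12 : g r1 = g r2 := hprojInj _ (hgA r1) _ (hgA r2) hF12
    have : f (Set.projIcc 0 1 zero_le_one r1) = f (Set.projIcc 0 1 zero_le_one r2) :=
      Subtype.ext hg12
    have hp := f.injective this
    rw [Set.projIcc_of_mem zero_le_one hr1, Set.projIcc_of_mem zero_le_one hr2] at hp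
    exact congrArg Subtype.val hp
  have hFval : ∀ (w : Set.Icc (0:ℝ) 1) (r : ℝ) (hA : φ r ∈ A), w = f.symm ⟨φ r, hA⟩ →
      F (w : ℝ) = r := by
    rintro w r hA rfl
    rw [hFdef]
    simp only
    rw [hgdef]
    simp only
    rw [Set.projIcc_of_mem zero_le_one (f.symm ⟨φ r, hA⟩).2]
    have : (⟨((f.symm ⟨φ r, hA⟩ : Set.Icc (0:ℝ) 1) : ℝ), (f.symm ⟨φ r, hA⟩).2⟩ :
        Set.Icc (0:ℝ) 1) = f.symm ⟨φ r, hA⟩ := Subtype.ext rfl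
    rw [this, Homeomorph.apply_symm_apply]
    exact hproj r
  have hFx : F (x : ℝ) = s := hFval x s hsA hxdef
  have hFy : F (y : ℝ) = u := hFval y u huA hydef
  have hFz : F (z : ℝ) = t := hFval z t htA hzdef
  -- monotonicity: y is between x and z
  have hbetween : |(x:ℝ) - y| ≤ |(x:ℝ) - z| := by
    rcases ContinuousOn.strictMonoOn_of_injOn_Icc' zero_le_one hFCont.continuousOn hFinj with
      hmono | hanti
    · have h1 : (x:ℝ) < y := by
        rw [← hmono.lt_iff_lt x.2 y.2, hFx, hFy]; exact hsu
      have h2 : (y:ℝ) < z := by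
        rw [← hmono.lt_iff_lt y.2 z.2, hFy, hFz]; exact hut
      rw [abs_of_nonpos (by linarith), abs_of_nonpos (by linarith)]
      linarith
    · have h1 : (y:ℝ) < x := by
        rw [← hanti.lt_iff_gt x.2 y.2, hFx, hFy]; exact hsu
      have h2 : (z:ℝ) < y := by
        rw [← hanti.lt_iff_gt y.2 z.2, hFy, hFz]; exact hut
      rw [abs_of_nonneg (by linarith), abs_of_nonneg (by linarith)]
      linarith
  have hxz : x ≠ z := by
    intro hxz
    have : s = t := by rw [← hFx, ← hFz, hxz]
    linarith
  have hdxz : 0 < dist x z := dist_pos.2 hxz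
  have hratio : dist x y / dist x z ≤ 1 := by
    rw [div_le_one hdxz, Subtype.dist_eq, Subtype.dist_eq, Real.dist_eq, Real.dist_eq]
    exact hbetween
  have hratio0 : 0 ≤ dist x y / dist x z := div_nonneg dist_nonneg dist_nonneg
  have hmain := hqs x y z hxz
  have hη1 : η (dist x y / dist x z) ≤ η 1 :=
    hη.monotoneOn hratio0 (by norm_num : (1:ℝ) ∈ Set.Ici 0) hratio
  -- identify the distances
  have hfx : (f x : EuclideanSpace ℝ (Fin (1+n))) = φ s := by
    rw [hxdef, Homeomorph.apply_symm_apply]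
  have hfy : (f y : EuclideanSpace ℝ (Fin (1+n))) = φ u := by
    rw [hydef, Homeomorph.apply_symm_apply]
  have hfz : (f z : EuclideanSpace ℝ (Fin (1+n))) = φ t := by
    rw [hzdef, Homeomorph.apply_symm_apply]
  have hd1 : dist (f x) (f y) = dist (φ s) (φ u) := by
    rw [Subtype.dist_eq, hfx, hfy]
  have hd2 : dist (f x) (f z) = dist (φ s) (φ t) := by
    rw [Subtype.dist_eq, hfx, hfz]
  have hd2pos : 0 < dist (φ s) (φ t) := by
    rw [dist_pos]
    intro heq
    have : s = t := by rw [← hproj s, ← hproj t, heq]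
    linarith
  have hlt : (C:ℝ) < dist (φ s) (φ u) / dist (φ s) (φ t) := by
    rw [lt_div_iff₀ hd2pos]
    linarith [hineq]
  rw [hd1, hd2] at hmain
  linarith

end Deterministic

/-- For `n ≥ 1` and `B` an `n`-dimensional Brownian motion started
at `0`, with `G = {(t, B t) : t ∈ [0,∞)} ⊆ ℝ^{1+n}` the graph of `B`, almost surely
every nondegenerate arc contained in `G` is not a quasiarc: for every `A ⊆ G` which
is the image of `[0,1]` under a homeomorphism and has more than one point, there is
no quasisymmetric homeomorphism from `[0,1]` onto `A`. -/
theorem brownian_graph_arcs_not_quasiarcs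
    {Ω : Type*} [MeasureSpace Ω] (n : ℕ) (hn : 1 ≤ n)
    (B : ℝ → Ω → EuclideanSpace ℝ (Fin n)) (hB : IsBrownianMotion n B) :
    ∀ᵐ ω ∂ℙ, ∀ A : Set (EuclideanSpace ℝ (Fin (1 + n))),
      A ⊆ (fun t => graphPoint t (B t ω)) '' Set.Ici 0 →
      Nonempty ((Set.Icc (0 : ℝ) 1) ≃ₜ A) →
      A.Nontrivial →
      ¬ ∃ f : (Set.Icc (0 : ℝ) 1) ≃ₜ A, IsQuasisymmetry f := by
  haveI := hB.isProbability
  have hae : ∀ᵐ ω ∂ℙ, ∀ p : ℕ × ℚ × ℚ,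
      (1 ≤ p.1 ∧ 0 ≤ p.2.1 ∧ ((p.2.1:ℝ) < (p.2.2:ℝ))) →
      ∃ s u t : ℝ, ((p.2.1 : ℚ):ℝ) ≤ s ∧ s < u ∧ u < t ∧ t ≤ ((p.2.2 : ℚ):ℝ) ∧
        ((p.1:ℕ):ℝ) * dist (graphPoint s (B s ω)) (graphPoint t (B t ω))
          < dist (graphPoint s (B s ω)) (graphPoint u (B u ω)) := by
    rw [ae_all_iff]
    intro p
    by_cases hp : 1 ≤ p.1 ∧ 0 ≤ p.2.1 ∧ ((p.2.1:ℝ) < (p.2.2:ℝ))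
    · obtain ⟨h1, h2, h3⟩ := hp
      have h2' : (0:ℝ) ≤ (p.2.1:ℝ) := by exact_mod_cast h2
      filter_upwards [key_prob hB hn p.1 h1 h2' h3] with ω hω _
      exact hω
    · filter_upwards with ω hcond
      exact absurd hcond hp
  filter_upwards [hae] with ω hω
  exact deterministic_part hn (fun t => B t ω)
    (fun C qa qb hC hqa hqarb => hω (C, qa, qb) ⟨hC, hqa, hqarb⟩)

end
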